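/- Let α > 1 and let f belong to the Müntz class M_α. Then for all x > 0 the summation formula Σ_{n=1}^∞ f(n² x) = Σ_{n=1}^∞ (Λf)(nx) holds, where (Λf)(x) = Σ_{n=1}^∞ λ(n) f(nx) is the operator with the Liouville function λ. -/

import Mathlib

open MeasureTheory Filter Asymptotics Set Complex

noncomputable section

/-- The Mellin transform of `f`. -/
def mellinT (f : ℝ → ℂ) (s : ℂ) : ℂ := ∫ x in Ioi (0:ℝ), (x : ℂ) ^ (s - 1) * f x

/-- The Müntz class `M_α`. -/
def MuntzClass (α : ℝ) (f : ℝ → ℂ) : Prop :=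
  ContDiffOn ℝ 2 f (Ici 0) ∧
  ∀ j : ℕ, j ≤ 2 →
    (iteratedDerivWithin j f (Ici 0)) =O[atTop] fun x : ℝ => x ^ (-(α + (j : ℝ)))

/-- The Möbius transformation `(Θf)(x) = ∑ f(nx)`. -/
def thetaOp (f : ℝ → ℂ) (x : ℝ) : ℂ := ∑' n : ℕ, f ((n + 1 : ℝ) * x)

/-- The Müntz operator. -/
def muntzOp (f : ℝ → ℂ) (x : ℝ) : ℂ :=
  thetaOp f x - (x : ℂ)⁻¹ * ∫ y in Ioi (0:ℝ), f y

/-- `(1/(2πi)) ∫_{σ-i∞}^{σ+i∞} g(s) ds`. -/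
def lineIntegral (g : ℂ → ℂ) (σ : ℝ) : ℂ :=
  (2 * Real.pi)⁻¹ • ∫ t : ℝ, g (σ + t * Complex.I)

/-- The Fourier cosine transform. -/
def fourierCos (f : ℝ → ℂ) (x : ℝ) : ℂ :=
  (Real.sqrt (2 / Real.pi) : ℂ) * ∫ t in Ioi (0:ℝ), f t * (Real.cos (x * t) : ℂ)

/-- The reduced Möbius operator. -/
def thetaHat (f : ℝ → ℂ) (x : ℝ) : ℂ :=
  ∑' n : ℕ, ((|ArithmeticFunction.moebius (n + 1)| : ℤ) : ℂ) * f ((n + 1 : ℝ) * x)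

/-- The Voronoi operator. -/
def voronoiOp (f : ℝ → ℂ) (x : ℝ) : ℂ :=
  (∑' n : ℕ, ((n + 1 : ℕ).divisors.card : ℂ) * f ((n + 1 : ℝ) * x)) -
    ∫ y in Ioi (0:ℝ), f (x * y) *
      ((Real.log y + 2 * Real.eulerMascheroniConstant : ℝ) : ℂ)

/-- The operator with the Liouville function `λ(n) = (-1)^{Ω(n)}`:
`(Λf)(x) = ∑ λ(n) f(nx)`. -/
def lambdaOp (f : ℝ → ℂ) (x : ℝ) : ℂ :=
  ∑' n : ℕ, (-1 : ℂ) ^ (ArithmeticFunction.cardFactors (n + 1)) * f ((n + 1 : ℝ) * x)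

/-! ### Auxiliary number-theoretic results -/

open ArithmeticFunction in
/-- The Liouville function as an arithmetic function. -/
def lamAF : ArithmeticFunction ℂ :=
  ⟨fun n => if n = 0 then 0 else (-1) ^ (ArithmeticFunction.cardFactors n), rfl⟩

lemma lamAF_apply {n : ℕ} (hn : n ≠ 0) :
    lamAF n = (-1) ^ (ArithmeticFunction.cardFactors n) := by
  simp [lamAF, hn]

lemma lamAF_isMultiplicative : lamAF.IsMultiplicative := by
  rw [ArithmeticFunction.IsMultiplicative.iff_ne_zero]
  refine ⟨by simp [lamAF], fun {m n} hm hn _ => ?_⟩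
  rw [lamAF_apply (Nat.mul_ne_zero hm hn), lamAF_apply hm, lamAF_apply hn,
    ArithmeticFunction.cardFactors_mul hm hn, pow_add]

lemma isSquare_of_even_factorization {n : ℕ} (hn : n ≠ 0)
    (h : ∀ p, Even (n.factorization p)) : IsSquare n := by
  refine ⟨n.factorization.prod fun p e => p ^ (e / 2), ?_⟩
  have key : (n.factorization.prod fun p e => p ^ (e / 2)) *
      (n.factorization.prod fun p e => p ^ (e / 2)) = n.factorization.prod fun p e => p ^ e := by
    rw [Finsupp.prod, Finsupp.prod, ← Finset.prod_mul_distrib]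
    refine Finset.prod_congr rfl fun p _ => ?_
    rw [← pow_add]
    congr 1
    obtain ⟨c, hc⟩ := h p
    omega
  rw [key]
  exact (Nat.factorization_prod_pow_eq_self hn).symm

lemma zeta_mul_lam_apply {n : ℕ} (hn : n ≠ 0) :
    (∑ d ∈ n.divisors, (-1 : ℂ) ^ (ArithmeticFunction.cardFactors d))
      = if IsSquare n then 1 else 0 := by
  have h1 : ∀ d ∈ n.divisors, (-1 : ℂ) ^ (ArithmeticFunction.cardFactors d) = lamAF d :=
    fun d hd => (lamAF_apply (Nat.pos_of_mem_divisors hd).ne').symm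
  rw [Finset.sum_congr rfl h1, ← ArithmeticFunction.coe_zeta_mul_apply]
  have hmul : (↑(ArithmeticFunction.zeta) * lamAF :
      ArithmeticFunction ℂ).IsMultiplicative :=
    (ArithmeticFunction.isMultiplicative_zeta.natCast).mul lamAF_isMultiplicative
  have hpk : ∀ p k : ℕ, p.Prime →
      ((↑(ArithmeticFunction.zeta) * lamAF : ArithmeticFunction ℂ)) (p ^ k)
        = if Even k then 1 else 0 := by
    intro p k hp
    rw [ArithmeticFunction.coe_zeta_mul_apply, Nat.sum_divisors_prime_pow hp]
    have h2 : ∀ i ∈ Finset.range (k + 1), lamAF (p ^ i) = (-1 : ℂ) ^ i := by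
      intro i _
      rw [lamAF_apply (pow_ne_zero i hp.pos.ne'),
        ArithmeticFunction.cardFactors_apply_prime_pow hp]
    rw [Finset.sum_congr rfl h2, neg_one_geom_sum]
    by_cases h : Even k <;> simp [Nat.even_add_one, h]
  rw [ArithmeticFunction.IsMultiplicative.multiplicative_factorization _ hmul hn]
  by_cases hsq : IsSquare n
  · rw [if_pos hsq]
    obtain ⟨m, rfl⟩ := hsq
    have hm : m ≠ 0 := by simpa using hn
    rw [Finsupp.prod]
    refine Finset.prod_eq_one fun p hp => ?_
    have hprime : p.Prime := Nat.prime_of_mem_primeFactors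
      (by rwa [Nat.support_factorization] at hp)
    rw [hpk p _ hprime, if_pos]
    rw [Nat.factorization_mul hm hm]
    exact ⟨m.factorization p, by simp⟩
  · rw [if_neg hsq]
    have hodd : ∃ p, ¬ Even (n.factorization p) := by
      by_contra hall
      push_neg at hall
      exact hsq (isSquare_of_even_factorization hn (by simpa using hall))
    obtain ⟨p, hp⟩ := hodd
    have hps : p ∈ n.factorization.support := by
      rw [Finsupp.mem_support_iff]
      intro h0
      exact hp (by simp [h0])
    rw [Finsupp.prod]
    refine Finset.prod_eq_zero hps ?_
    have hprime : p.Prime := Nat.prime_of_mem_primeFactors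
      (by rwa [Nat.support_factorization] at hps)
    rw [hpk p _ hprime, if_neg hp]

/-! ### Auxiliary analytic results -/

lemma muntz_bound (α : ℝ) (hα : 0 ≤ α) (f : ℝ → ℂ) (hf : MuntzClass α f) {x : ℝ} (hx : 0 < x) :
    ∃ C : ℝ, 0 ≤ C ∧ ∀ y : ℝ, x ≤ y → ‖f y‖ ≤ C * y ^ (-α) := by
  have h0 : f =O[atTop] fun y : ℝ => y ^ (-α) := by
    have := hf.2 0 (by norm_num)
    simpa [iteratedDerivWithin_zero] using this
  obtain ⟨C₀, hC₀⟩ := h0.bound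
  rw [eventually_atTop] at hC₀
  obtain ⟨y₀, hy₀⟩ := hC₀
  set z : ℝ := max y₀ x with hzdef
  have hxz : x ≤ z := le_max_right _ _
  have hzpos : 0 < z := lt_of_lt_of_le hx hxz
  have hcont : ContinuousOn f (Icc x z) :=
    (hf.1.continuousOn).mono (fun y hy => le_trans hx.le hy.1)
  obtain ⟨M, hM⟩ := isCompact_Icc.exists_bound_of_continuousOn hcont
  refine ⟨max |C₀| ((max M 0) * z ^ α), le_max_of_le_left (abs_nonneg _), fun y hy => ?_⟩
  have hypos : 0 < y := lt_of_lt_of_le hx hy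
  have hyrp : 0 < y ^ (-α) := Real.rpow_pos_of_pos hypos _
  by_cases hyz : z ≤ y
  · have h1 := hy₀ y (le_trans (le_max_left _ _) hyz)
    have h2 : ‖(y : ℝ) ^ (-α)‖ = y ^ (-α) := by
      rw [Real.norm_eq_abs, abs_of_pos hyrp]
    calc ‖f y‖ ≤ C₀ * ‖(y : ℝ) ^ (-α)‖ := h1
      _ = C₀ * y ^ (-α) := by rw [h2]
      _ ≤ |C₀| * y ^ (-α) := mul_le_mul_of_nonneg_right (le_abs_self _) hyrp.le
      _ ≤ max |C₀| ((max M 0) * z ^ α) * y ^ (-α) :=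
          mul_le_mul_of_nonneg_right (le_max_left _ _) hyrp.le
  · push_neg at hyz
    have hyIcc : y ∈ Icc x z := ⟨hy, hyz.le⟩
    have h3 : ‖f y‖ ≤ M := hM y hyIcc
    have h4 : z ^ (-α) ≤ y ^ (-α) := by
      rw [Real.rpow_neg hzpos.le, Real.rpow_neg hypos.le]
      exact inv_anti₀ (Real.rpow_pos_of_pos hypos _)
        (Real.rpow_le_rpow hypos.le hyz.le hα)
    have h5 : (1:ℝ) = z ^ α * z ^ (-α) := by
      rw [← Real.rpow_add hzpos]; simp
    calc ‖f y‖ ≤ M := h3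
      _ ≤ max M 0 := le_max_left _ _
      _ = (max M 0) * (z ^ α * z ^ (-α)) := by rw [← h5, mul_one]
      _ = ((max M 0) * z ^ α) * z ^ (-α) := by ring
      _ ≤ ((max M 0) * z ^ α) * y ^ (-α) := by
          refine mul_le_mul_of_nonneg_left h4 ?_
          positivity
      _ ≤ max |C₀| ((max M 0) * z ^ α) * y ^ (-α) :=
          mul_le_mul_of_nonneg_right (le_max_right _ _) hyrp.le

/-- summation formula for the operator with the Liouville function. -/
theorem liouville_summation (α : ℝ) (hα : 1 < α) (f : ℝ → ℂ) (hf : MuntzClass α f) :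
    ∀ x : ℝ, 0 < x →
      (∑' n : ℕ, f ((n + 1 : ℝ) ^ 2 * x)) = ∑' n : ℕ, lambdaOp f ((n + 1 : ℝ) * x) := by
  intro x hx
  obtain ⟨C, hC0, hC⟩ := muntz_bound α (by linarith) f hf hx
  have hb : Summable (fun n : ℕ => (n : ℝ) ^ (-α)) :=
    Real.summable_nat_rpow.mpr (by linarith)
  set A : ℕ × ℕ → ℂ := fun p =>
    if p.1 = 0 ∨ p.2 = 0 then 0
    else (-1 : ℂ) ^ (ArithmeticFunction.cardFactors p.2) * f (((p.1 * p.2 : ℕ) : ℝ) * x) with hA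
  -- summability of `A`
  have hAbound : ∀ p : ℕ × ℕ,
      ‖A p‖ ≤ (C * x ^ (-α)) * ((p.1 : ℝ) ^ (-α) * (p.2 : ℝ) ^ (-α)) := by
    rintro ⟨m, k⟩
    by_cases h : m = 0 ∨ k = 0
    · have hz : A (m, k) = 0 := by simp [hA, h]
      rw [hz, norm_zero]
      have : (0:ℝ) ≤ x ^ (-α) := Real.rpow_nonneg hx.le _
      positivity
    · push_neg at h
      obtain ⟨hm, hk⟩ := h
      have hm1 : (1:ℝ) ≤ (m : ℝ) := by exact_mod_cast Nat.one_le_iff_ne_zero.mpr hm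
      have hk1 : (1:ℝ) ≤ (k : ℝ) := by exact_mod_cast Nat.one_le_iff_ne_zero.mpr hk
      have hstep : A (m, k) =
          (-1 : ℂ) ^ (ArithmeticFunction.cardFactors k) * f (((m * k : ℕ) : ℝ) * x) := by
        simp [hA, hm, hk]
      have hcast : ((m * k : ℕ) : ℝ) = (m : ℝ) * (k : ℝ) := by push_cast; ring
      have hxy : x ≤ ((m * k : ℕ) : ℝ) * x := by
        rw [hcast]
        have h1mk : (1:ℝ) ≤ (m:ℝ) * (k:ℝ) := by nlinarith
        nlinarith
      calc ‖A (m, k)‖ = ‖f (((m * k : ℕ) : ℝ) * x)‖ := by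
            rw [hstep, norm_mul]
            simp
        _ ≤ C * (((m * k : ℕ) : ℝ) * x) ^ (-α) := hC _ hxy
        _ = (C * x ^ (-α)) * ((m : ℝ) ^ (-α) * (k : ℝ) ^ (-α)) := by
            rw [hcast, Real.mul_rpow (by positivity) hx.le,
              Real.mul_rpow (by positivity) (by positivity)]
            ring
  have hrpn : ∀ n : ℕ, 0 ≤ (n : ℝ) ^ (-α) := fun n => Real.rpow_nonneg (Nat.cast_nonneg n) _
  have hbs : Summable (fun p : ℕ × ℕ => (p.1 : ℝ) ^ (-α) * (p.2 : ℝ) ^ (-α)) :=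
    hb.mul_of_nonneg hb (fun n => hrpn n) (fun n => hrpn n)
  have hAsum : Summable A :=
    Summable.of_norm (Summable.of_nonneg_of_le (fun p => norm_nonneg _) hAbound
      (hbs.mul_left _))
  -- shifting
  set e : ℕ × ℕ → ℕ × ℕ := fun p => (p.1 + 1, p.2 + 1) with he
  have he_inj : Function.Injective e := by
    rintro ⟨a, b⟩ ⟨c, d⟩ h
    simp only [he, Prod.mk.injEq] at h
    exact Prod.ext (by omega) (by omega)
  have hsupp : Function.support A ⊆ Set.range e := by
    rintro ⟨m, k⟩ hp
    simp only [Function.mem_support] at hp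
    have hm : m ≠ 0 := by rintro rfl; exact hp (by simp [hA])
    have hk : k ≠ 0 := by rintro rfl; exact hp (by simp [hA])
    exact ⟨(m - 1, k - 1), by simp only [he, Prod.mk.injEq]; omega⟩
  -- the right-hand side as a sum over pairs
  have hterm : ∀ m k : ℕ, A (e (m, k)) =
      (-1 : ℂ) ^ (ArithmeticFunction.cardFactors (k + 1)) *
        f ((k + 1 : ℝ) * ((m + 1 : ℝ) * x)) := by
    intro m k
    have hne : ¬((m + 1 = 0) ∨ (k + 1 = 0)) := by omega
    have hargs : (((m + 1) * (k + 1) : ℕ) : ℝ) * x = (k + 1 : ℝ) * ((m + 1 : ℝ) * x) := by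
      push_cast; ring
    show (if (m + 1 = 0) ∨ (k + 1 = 0) then (0:ℂ) else _) = _
    rw [if_neg hne, hargs]
  have hRHS : (∑' n : ℕ, lambdaOp f ((n + 1 : ℝ) * x)) = ∑' p : ℕ × ℕ, A p := by
    have h1 : ∀ m : ℕ, lambdaOp f ((m + 1 : ℝ) * x) = ∑' k : ℕ, A (e (m, k)) := by
      intro m
      exact tsum_congr fun k => (hterm m k).symm
    have h2 : Summable (A ∘ e) := hAsum.comp_injective he_inj
    calc (∑' n : ℕ, lambdaOp f ((n + 1 : ℝ) * x))
        = ∑' (m : ℕ) (k : ℕ), A (e (m, k)) := tsum_congr h1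
      _ = ∑' p : ℕ × ℕ, A (e p) := (h2.tsum_prod).symm
      _ = ∑' p : ℕ × ℕ, A p := he_inj.tsum_eq hsupp
  -- fiberwise summation over n = p.1 * p.2
  have hfib := (hAsum.hasSum).tsum_fiberwise (fun p : ℕ × ℕ => p.1 * p.2)
  set c : ℕ → ℂ := fun n =>
    if n = 0 then 0 else (if IsSquare n then 1 else 0) * f ((n : ℝ) * x) with hc
  have hfc : ∀ n : ℕ, (∑' q : (fun p : ℕ × ℕ => p.1 * p.2) ⁻¹' {n}, A q) = c n := by
    intro n
    rcases eq_or_ne n 0 with rfl | hn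
    · have hz : ∀ q : (fun p : ℕ × ℕ => p.1 * p.2) ⁻¹' {(0:ℕ)}, A q = 0 := by
        rintro ⟨⟨m, k⟩, hq⟩
        simp only [Set.mem_preimage, Set.mem_singleton_iff, Nat.mul_eq_zero] at hq
        simp [hA, hq]
      rw [tsum_congr hz, tsum_zero]
      simp [hc]
    · rw [show (fun p : ℕ × ℕ => p.1 * p.2) ⁻¹' {n} = ↑(n.divisorsAntidiagonal) by
        ext p; simp [Nat.mem_divisorsAntidiagonal, hn]]
      rw [Finset.tsum_subtype']
      have hAp : ∀ p ∈ n.divisorsAntidiagonal, A p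
          = (-1 : ℂ) ^ (ArithmeticFunction.cardFactors p.2) * f ((n : ℝ) * x) := by
        intro p hp
        obtain ⟨h1, h2⟩ := Nat.ne_zero_of_mem_divisorsAntidiagonal hp
        have h3 : p.1 * p.2 = n := (Nat.mem_divisorsAntidiagonal.mp hp).1
        simp only [hA]
        rw [if_neg (by tauto), h3]
      rw [Finset.sum_congr rfl hAp, ← Finset.sum_mul]
      have h4 : (∑ p ∈ n.divisorsAntidiagonal,
            (-1 : ℂ) ^ (ArithmeticFunction.cardFactors p.2))
          = ∑ d ∈ n.divisors, (-1 : ℂ) ^ (ArithmeticFunction.cardFactors d) :=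
        Nat.sum_divisorsAntidiagonal' (f := fun _ d => (-1 : ℂ) ^ (ArithmeticFunction.cardFactors d))
      rw [h4, zeta_mul_lam_apply hn]
      simp [hc, hn]
  -- reindexing over squares
  have hLHS : (∑' m : ℕ, c ((m + 1) ^ 2)) = ∑' n : ℕ, c n := by
    refine Function.Injective.tsum_eq (g := fun m : ℕ => (m + 1) ^ 2) ?_ ?_
    · intro a b h
      have := Nat.pow_left_injective (by norm_num) h
      omega
    · intro n hn
      simp only [Function.mem_support] at hn
      rcases eq_or_ne n 0 with rfl | h0
      · exact absurd (by simp [hc]) hn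
      have hsq : IsSquare n := by
        by_contra hns
        exact hn (by simp [hc, h0, hns])
      obtain ⟨t, rfl⟩ := hsq
      have ht : t ≠ 0 := by simpa using h0
      refine ⟨t - 1, ?_⟩
      show (t - 1 + 1) ^ 2 = t * t
      rw [show t - 1 + 1 = t by omega, pow_two]
  have hcm : ∀ m : ℕ, c ((m + 1) ^ 2) = f ((m + 1 : ℝ) ^ 2 * x) := by
    intro m
    have h0 : (m + 1) ^ 2 ≠ 0 := by positivity
    have hsq : IsSquare ((m + 1) ^ 2) := ⟨m + 1, (pow_two _)⟩
    simp only [hc, if_neg h0, if_pos hsq, one_mul]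
    congr 1
    push_cast
    ring
  calc (∑' n : ℕ, f ((n + 1 : ℝ) ^ 2 * x))
      = ∑' m : ℕ, c ((m + 1) ^ 2) := tsum_congr fun m => (hcm m).symm
    _ = ∑' n : ℕ, c n := hLHS
    _ = ∑' n : ℕ, ∑' q : (fun p : ℕ × ℕ => p.1 * p.2) ⁻¹' {n}, A q :=
        tsum_congr fun n => (hfc n).symm
    _ = ∑' p : ℕ × ℕ, A p := hfib.tsum_eq
    _ = ∑' n : ℕ, lambdaOp f ((n + 1 : ℝ) * x) := hRHS.symm
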